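/- Let n = rk with r ≥ 3, k ≥ 2, and f = f_{r,k} as above. Then for any nonzero v, v' ∈ F_q^n, if V(f)* ∩ H(v) ⊆ H(v') then H(v) = H(v'). Consequently V(f)* spans F_q^n. -/

import Mathlib

/-- Index of the `i`-th variable of the `j`-th block of `r` variables inside `Fin (r*k)`. -/
def mIdx (r k : ℕ) (j : Fin k) (i : Fin r) : Fin (r * k) :=
  ⟨j.1 * r + i.1, by
    have hj := j.2; have hi := i.2
    calc j.1 * r + i.1 < (j.1 + 1) * r := by nlinarith
      _ ≤ k * r := Nat.mul_le_mul_right r hj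
      _ = r * k := Nat.mul_comm _ _⟩

/-- `f_{r,k}(x) = Σ_{j=0}^{k-1} x_{jr+1} ⋯ x_{jr+r}`. -/
def frk (F : Type) [Field F] (r k : ℕ) (x : Fin (r * k) → F) : F :=
  ∑ j : Fin k, ∏ i : Fin r, x (mIdx r k j i)

lemma frk_small (F : Type) [Field F] (r k : ℕ) (hr : 3 ≤ r)
    (x : Fin (r * k) → F) (a b : Fin (r * k))
    (hx : ∀ m : Fin (r * k), m ≠ a → m ≠ b → x m = 0) :
    frk F r k x = 0 := by
  unfold frk
  refine Finset.sum_eq_zero fun j _ => ?_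
  set m0 := mIdx r k j ⟨0, by omega⟩ with hm0
  set m1 := mIdx r k j ⟨1, by omega⟩ with hm1
  set m2 := mIdx r k j ⟨2, by omega⟩ with hm2
  have h01 : m0 ≠ m1 := by simp [hm0, hm1, mIdx, Fin.ext_iff]
  have h02 : m0 ≠ m2 := by simp [hm0, hm2, mIdx, Fin.ext_iff]
  have h12 : m1 ≠ m2 := by simp [hm1, hm2, mIdx, Fin.ext_iff]
  have key : (m0 ≠ a ∧ m0 ≠ b) ∨ (m1 ≠ a ∧ m1 ≠ b) ∨ (m2 ≠ a ∧ m2 ≠ b) := by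
    by_cases h0a : m0 = a
    · by_cases h1b : m1 = b
      · exact Or.inr (Or.inr ⟨fun h => h02 (h0a.trans h.symm), fun h => h12 (h1b.trans h.symm)⟩)
      · by_cases h1a : m1 = a
        · exact absurd (h0a.trans h1a.symm) h01
        · exact Or.inr (Or.inl ⟨h1a, h1b⟩)
    · by_cases h0b : m0 = b
      · by_cases h1a : m1 = a
        · exact Or.inr (Or.inr ⟨fun h => h12 (h1a.trans h.symm), fun h => h02 (h0b.trans h.symm)⟩)
        · by_cases h1b : m1 = b
          · exact absurd (h0b.trans h1b.symm) h01
          · exact Or.inr (Or.inl ⟨h1a, h1b⟩)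
      · exact Or.inl ⟨h0a, h0b⟩
  rcases key with ⟨h1, h2⟩ | ⟨h1, h2⟩ | ⟨h1, h2⟩
  · exact Finset.prod_eq_zero (Finset.mem_univ _) (hx _ h1 h2)
  · exact Finset.prod_eq_zero (Finset.mem_univ _) (hx _ h1 h2)
  · exact Finset.prod_eq_zero (Finset.mem_univ _) (hx _ h1 h2)

/-- for `r ≥ 3`, `k ≥ 2` and any nonzero `v, v'`, if
`V(f_{r,k})* ∩ H(v) ⊆ H(v')` then `H(v) = H(v')`; consequently `V(f_{r,k})*`
spans `F_q^{rk}`. -/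
theorem stmt17 (F : Type) [Field F] [Fintype F] (r k : ℕ) (hr : 3 ≤ r) (hk : 2 ≤ k) :
    (∀ v v' : Fin (r * k) → F, v ≠ 0 → v' ≠ 0 →
      ({x : Fin (r * k) → F | x ≠ 0 ∧ frk F r k x = 0} ∩
          {x : Fin (r * k) → F | ∑ i, v i * x i = 0} ⊆
        {x : Fin (r * k) → F | ∑ i, v' i * x i = 0}) →
      {x : Fin (r * k) → F | ∑ i, v i * x i = 0} =
        {x : Fin (r * k) → F | ∑ i, v' i * x i = 0}) ∧
    Submodule.span F {x : Fin (r * k) → F | x ≠ 0 ∧ frk F r k x = 0} = ⊤ := by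
  constructor
  · intro v v' hv hv' hsub
    obtain ⟨n, hn⟩ : ∃ n, v n ≠ 0 := by
      by_contra h; push_neg at h; exact hv (funext h)
    have key : ∀ i, i ≠ n → v' i = v i * (v n)⁻¹ * v' n := by
      intro i hi
      set c : F := v i * (v n)⁻¹ with hc
      set p : Fin (r * k) → F := fun m => (if m = i then (1:F) else 0) - c * (if m = n then (1:F) else 0) with hp
      have hpi : p i = 1 := by simp [hp, hi]
      have hsum : ∀ w : Fin (r * k) → F, ∑ m, w m * p m = w i - c * w n := by
        intro w
        simp only [hp, mul_sub, Finset.sum_sub_distrib, mul_ite, mul_one,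
          mul_zero, Finset.sum_ite_eq', Finset.mem_univ, if_true, mul_left_comm,
          ← Finset.mul_sum]
        ring
      have hmem : p ∈ {x : Fin (r * k) → F | x ≠ 0 ∧ frk F r k x = 0} ∩
          {x : Fin (r * k) → F | ∑ m, v m * x m = 0} := by
        refine ⟨⟨?_, ?_⟩, ?_⟩
        · intro h
          have := congrFun h i
          rw [hpi] at this
          simp at this
        · exact frk_small F r k hr p i n (fun m hm1 hm2 => by
            simp [hp, hm1, hm2])
        · show ∑ m, v m * p m = 0
          rw [hsum, hc]
          field_simp
          ring
        
      have h2 : ∑ m, v' m * p m = 0 := hsub hmem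
      rw [hsum] at h2
      rw [hc] at h2
      linear_combination h2
    have hvn' : v' n ≠ 0 := by
      intro h0
      apply hv'
      funext i
      by_cases hi : i = n
      · rw [hi, h0]; rfl
      · rw [key i hi, h0, mul_zero]; rfl
    have key2 : ∀ i, v' i = (v' n * (v n)⁻¹) * v i := by
      intro i
      by_cases hi : i = n
      · subst hi; field_simp
      · rw [key i hi]; field_simp
    have hc' : v' n * (v n)⁻¹ ≠ 0 := mul_ne_zero hvn' (inv_ne_zero hn)
    ext x
    simp only [Set.mem_setOf_eq]
    have hxs : ∑ m, v' m * x m = (v' n * (v n)⁻¹) * ∑ m, v m * x m := by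
      rw [Finset.mul_sum]
      exact Finset.sum_congr rfl fun m _ => by rw [key2 m]; ring
    constructor
    · intro h; rw [hxs, h, mul_zero]
    · intro h
      rw [hxs] at h
      rcases mul_eq_zero.mp h with h | h
      · exact absurd h hc'
      · exact h
  · rw [eq_top_iff]
    intro x _
    rw [pi_eq_sum_univ x]
    refine Submodule.sum_mem _ fun i _ => Submodule.smul_mem _ _ (Submodule.subset_span ?_)
    refine ⟨?_, ?_⟩
    · intro h
      have := congrFun h i
      simp at this
    · refine frk_small F r k hr _ i i (fun m hm1 _ => ?_)
      simp [Ne.symm hm1]
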